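/- Let ε > 0 and f : [0,1] → ℝ be 1-Lipschitz. Then there exists a GroupSort neural network D of grouping size 2 satisfying Assumption 1 with sup_{x ∈ [0,1]} |f(x) − D(x)| ≤ ε, whose depth is 2⌈log₂(1/ε)⌉ + 1 and whose size is at most 3·4^{⌈log₂(1/ε)⌉} + 2^{⌈log₂(1/ε)⌉} − 1 (in particular O((1/ε)²)). -/

import Mathlib

open Matrix

/-- A GroupSort feedforward neural network with grouping size `k`, input dimension `d`
and real output.  `depth` is the number of affine layers (`q` in the paper), so there are
`depth - 1` hidden layers of widths `width 1, …, width (depth - 1)` (each divisible by `k`),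
with `width 0 = d` (input) and `width depth = 1` (output). -/
structure GroupSortNet (k d : ℕ) where
  depth : ℕ
  depth_pos : 1 ≤ depth
  width : ℕ → ℕ
  width_in : width 0 = d
  width_out : width depth = 1
  width_div : ∀ i, 1 ≤ i → i ≤ depth - 1 → k ∣ width i
  V : (i : ℕ) → Matrix (Fin (width (i + 1))) (Fin (width i)) ℝ
  c : (i : ℕ) → Fin (width (i + 1)) → ℝ

/-- The GroupSort activation with grouping size `k`: the coordinates are split into
consecutive groups of `k` elements and each group is sorted in decreasing order. -/
noncomputable def groupSortFun (k : ℕ) {ν : ℕ} (x : Fin ν → ℝ) : Fin ν → ℝ := fun i =>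
  if hk : 0 < k then
    let grp : Fin k → ℝ := fun j =>
      if h : ((i : ℕ) / k) * k + (j : ℕ) < ν then x ⟨((i : ℕ) / k) * k + (j : ℕ), h⟩ else 0
    (grp ∘ Tuple.sort grp)
      ⟨k - 1 - (i : ℕ) % k, lt_of_le_of_lt (Nat.sub_le _ _) (Nat.sub_lt hk Nat.one_pos)⟩
  else x i

/-- Output of the hidden layers: `post x i` is the (activated) output of layer `i`. -/
noncomputable def GroupSortNet.post {k d : ℕ} (N : GroupSortNet k d) (x : Fin d → ℝ) :
    (i : ℕ) → Fin (N.width i) → ℝ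
  | 0 => fun j => x (Fin.cast N.width_in j)
  | i + 1 => groupSortFun k (N.V i *ᵥ N.post x i + N.c i)

/-- The real-valued function computed by the network (no activation after the last
affine layer). -/
noncomputable def GroupSortNet.eval {k d : ℕ} (N : GroupSortNet k d) (x : Fin d → ℝ) : ℝ :=
  (N.V (N.depth - 1) *ᵥ N.post x (N.depth - 1) + N.c (N.depth - 1))
    ⟨0, by
      have h : N.depth - 1 + 1 = N.depth := Nat.succ_pred_eq_of_pos N.depth_pos
      rw [h, N.width_out]
      exact Nat.one_pos⟩

/-- The size of the network: the sum of the widths of the hidden layers. -/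
def GroupSortNet.size {k d : ℕ} (N : GroupSortNet k d) : ℕ :=
  ∑ i ∈ Finset.Icc 1 (N.depth - 1), N.width i

/-- Assumption 1: `‖V₁‖_{2,∞} ≤ 1` (every row of `V₁` has Euclidean norm at most `1`),
`‖V_i‖_∞ ≤ 1` for `i = 2, …, q` (every row has `ℓ¹`-norm at most `1`), and all offsets
are bounded by some constant `K₂ ≥ 0`. -/
def GroupSortNet.Assumption1 {k d : ℕ} (N : GroupSortNet k d) : Prop :=
  (∀ r, ∑ j, (N.V 0 r j) ^ 2 ≤ 1) ∧
  (∀ i, 1 ≤ i → i < N.depth → ∀ r, ∑ j, |N.V i r j| ≤ 1) ∧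
  (∃ K₂ : ℝ, 0 ≤ K₂ ∧ ∀ i, i < N.depth → ∀ r, |N.c i r| ≤ K₂)

/- ======================= auxiliary development ======================= -/

lemma sort_two (g : Fin 2 → ℝ) :
    (g ∘ Tuple.sort g) 0 = min (g 0) (g 1) ∧ (g ∘ Tuple.sort g) 1 = max (g 0) (g 1) := by
  have hmono := Tuple.monotone_sort g
  have h01 : (g ∘ Tuple.sort g) 0 ≤ (g ∘ Tuple.sort g) 1 := hmono (by decide)
  set σ := Tuple.sort g with hσ
  have hcases : ∀ a : Fin 2, a = 0 ∨ a = 1 := by decide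
  rcases hcases (σ 0) with h0 | h0
  · have h1 : σ 1 = 1 := by
      rcases hcases (σ 1) with h1 | h1
      · exact absurd (σ.injective (h0.trans h1.symm)) (by decide)
      · exact h1
    have hle : g 0 ≤ g 1 := by
      have := h01; simpa [Function.comp_apply, h0, h1] using this
    constructor
    · simp only [Function.comp_apply, h0]; simp [min_eq_left hle]
    · simp only [Function.comp_apply, h1]; simp [max_eq_right hle]
  · have h1 : σ 1 = 0 := by
      rcases hcases (σ 1) with h1 | h1
      · exact h1
      · exact absurd (σ.injective (h0.trans h1.symm)) (by decide)
    have hle : g 1 ≤ g 0 := by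
      have := h01; simpa [Function.comp_apply, h0, h1] using this
    constructor
    · simp only [Function.comp_apply, h0]; simp [min_eq_right hle]
    · simp only [Function.comp_apply, h1]; simp [max_eq_left hle]

lemma groupSortFun_two {ν : ℕ} (x : Fin ν → ℝ) (p : ℕ) (h : 2*p+1 < ν) :
    groupSortFun 2 x ⟨2*p, by omega⟩ = max (x ⟨2*p, by omega⟩) (x ⟨2*p+1, h⟩) ∧
    groupSortFun 2 x ⟨2*p+1, h⟩ = min (x ⟨2*p, by omega⟩) (x ⟨2*p+1, h⟩) := by
  have hdiv0 : (2*p) / 2 = p := by omega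
  have hdiv1 : (2*p+1) / 2 = p := by omega
  have hmod0 : (2*p) % 2 = 0 := by omega
  have hmod1 : (2*p+1) % 2 = 1 := by omega
  set g : Fin 2 → ℝ := fun j =>
      if h : p * 2 + (j : ℕ) < ν then x ⟨p * 2 + (j : ℕ), h⟩ else 0 with hg
  have hg0 : g 0 = x ⟨2*p, by omega⟩ := by
    rw [hg]; simp only []
    rw [dif_pos (by omega : p * 2 + ((0 : Fin 2) : ℕ) < ν)]
    congr 1; apply Fin.ext; simp; omega
  have hg1 : g 1 = x ⟨2*p+1, h⟩ := by
    rw [hg]; simp only []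
    rw [dif_pos (by omega : p * 2 + ((1 : Fin 2) : ℕ) < ν)]
    congr 1; apply Fin.ext; simp; omega
  obtain ⟨hmin, hmax⟩ := sort_two g
  constructor
  · show (if hk : 0 < 2 then _ else _) = _
    rw [dif_pos (by norm_num : (0:ℕ) < 2)]
    simp only [hdiv0, hmod0]
    rw [← hg0, ← hg1, ← hmax]; rfl
  · show (if hk : 0 < 2 then _ else _) = _
    rw [dif_pos (by norm_num : (0:ℕ) < 2)]
    simp only [hdiv1, hmod1]
    rw [← hg0, ← hg1, ← hmin]; rfl

lemma sum_ind_mul {m : ℕ} (v : Fin m → ℝ) (t : ℕ) (ht : t < m) :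
    ∑ j : Fin m, (if (j:ℕ) = t then (1:ℝ) else 0) * v j = v ⟨t, ht⟩ := by
  rw [Finset.sum_eq_single (⟨t, ht⟩ : Fin m)]
  · simp
  · intro b _ hb
    have : (b:ℕ) ≠ t := fun hc => hb (Fin.ext hc)
    simp [this]
  · intro hm; exact absurd (Finset.mem_univ _) hm

lemma sum_abs_ind (m t : ℕ) :
    ∑ j : Fin m, |(if (j:ℕ) = t then (1:ℝ) else 0)| ≤ 1 := by
  by_cases ht : t < m
  · have : ∑ j : Fin m, |(if (j:ℕ) = t then (1:ℝ) else 0)| = 1 := by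
      rw [Finset.sum_eq_single (⟨t, ht⟩ : Fin m)]
      · simp
      · intro b _ hb
        have : (b:ℕ) ≠ t := fun hc => hb (Fin.ext hc)
        simp [this]
      · intro hm; exact absurd (Finset.mem_univ _) hm
    rw [this]
  · have : ∀ j : Fin m, |(if (j:ℕ) = t then (1:ℝ) else 0)| = 0 := by
      intro j
      have : (j:ℕ) ≠ t := by omega
      simp [this]
    rw [Finset.sum_congr rfl (fun j _ => this j)]
    simp

/-- grid points -/
noncomputable def gsXC (n j : ℕ) : ℝ := ((j:ℝ) + 1/2) / 2^n

/-- matrix entries -/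
noncomputable def gsVE (n i r j : ℕ) : ℝ :=
  if i = 0 then (if r % 2 = 0 then 1 else -1)
  else if i = 1 then (if j = 2*r+1 then 1 else 0)
  else if i ≤ n then (if j = 2*r then 1 else 0)
  else (if j = 0 then 1 else 0)

/-- bias entries -/
noncomputable def gsCE (f : ℝ → ℝ) (n i r : ℕ) : ℝ :=
  if i = 0 then
    (if r % 2 = 0 then f (gsXC n (r/2)) - gsXC n (r/2) else f (gsXC n (r/2)) + gsXC n (r/2))
  else 0

noncomputable def gsNet (f : ℝ → ℝ) (n : ℕ) : GroupSortNet 2 1 where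
  depth := 2*n+1
  depth_pos := by omega
  width := fun i => if i = 0 ∨ 2*n+1 ≤ i then 1 else 2^(n+1)
  width_in := by simp
  width_out := by simp
  width_div := by
    intro i h1 h2
    show 2 ∣ if i = 0 ∨ 2*n+1 ≤ i then 1 else 2^(n+1)
    rw [if_neg (by omega)]
    exact ⟨2^n, by ring⟩
  V := fun i => Matrix.of (fun r j => gsVE n i r.val j.val)
  c := fun i r => gsCE f n i r.val

lemma gsNet_width (f : ℝ → ℝ) (n : ℕ) {i : ℕ} (h1 : 1 ≤ i) (h2 : i ≤ 2*n) :
    (gsNet f n).width i = 2^(n+1) := if_neg (by omega)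

lemma gsNet_width0 (f : ℝ → ℝ) (n : ℕ) : (gsNet f n).width 0 = 1 := rfl

/-- recursive max values -/
noncomputable def gsMV (f : ℝ → ℝ) (n : ℕ) (x : ℝ) : ℕ → ℕ → ℝ
  | 0, j => f (gsXC n j) - |x - gsXC n j|
  | s+1, j => max (gsMV f n x s (2*j)) (gsMV f n x s (2*j+1))

lemma min_add_sub (a t : ℝ) : min (a+t) (a-t) = a - |t| := by
  rcases le_total 0 t with h | h
  · rw [abs_of_nonneg h]; exact min_eq_right (by linarith)
  · rw [abs_of_nonpos h]
    rw [min_eq_left (by linarith)]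
    ring

section eval

variable (f : ℝ → ℝ) (n : ℕ) (x : ℝ)

/-- preactivation of layer 1 -/
lemma gsPre1 (r : Fin ((gsNet f n).width 1)) :
    ((gsNet f n).V 0 *ᵥ (gsNet f n).post (fun _ => x) 0 + (gsNet f n).c 0) r
      = if (r:ℕ) % 2 = 0 then f (gsXC n ((r:ℕ)/2)) + (x - gsXC n ((r:ℕ)/2))
        else f (gsXC n ((r:ℕ)/2)) - (x - gsXC n ((r:ℕ)/2)) := by
  have hpost0 : ∀ j : Fin ((gsNet f n).width 0),
      (gsNet f n).post (fun _ => x) 0 j = x := fun j => rfl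
  have : ((gsNet f n).V 0 *ᵥ (gsNet f n).post (fun _ => x) 0) r
      = ∑ j : Fin ((gsNet f n).width 0), gsVE n 0 (r:ℕ) (j:ℕ) * x := by
    simp only [Matrix.mulVec, dotProduct]
    refine Finset.sum_congr rfl (fun j _ => ?_)
    rw [hpost0 j]; rfl
  have hsum : ∑ j : Fin ((gsNet f n).width 0), gsVE n 0 (r:ℕ) (j:ℕ) * x
      = gsVE n 0 (r:ℕ) 0 * x := by
    have he : ∀ j : Fin ((gsNet f n).width 0), gsVE n 0 (r:ℕ) (j:ℕ) * x
        = gsVE n 0 (r:ℕ) 0 * x := by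
      intro j
      simp [gsVE]
    rw [Finset.sum_congr rfl (fun j _ => he j), Finset.sum_const]
    rw [Finset.card_univ, Fintype.card_fin, gsNet_width0]; simp
  have hc : (gsNet f n).c 0 r = gsCE f n 0 (r:ℕ) := rfl
  rw [Pi.add_apply, this, hsum, hc]
  by_cases hr : (r:ℕ) % 2 = 0
  · simp only [gsVE, gsCE, if_pos rfl, if_pos hr, if_true]
    ring
  · simp only [gsVE, gsCE, if_pos rfl, if_neg hr, if_true]
    ring

/-- selection layers: preactivation picks out one coordinate of the previous layer -/
lemma gsPreSel {i : ℕ} (hi : 1 ≤ i) (r : Fin ((gsNet f n).width (i+1))) (t : ℕ)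
    (ht : t < (gsNet f n).width i)
    (hV : ∀ j : ℕ, gsVE n i (r:ℕ) j = if j = t then 1 else 0) :
    ((gsNet f n).V i *ᵥ (gsNet f n).post (fun _ => x) i + (gsNet f n).c i) r
      = (gsNet f n).post (fun _ => x) i ⟨t, ht⟩ := by
  have hc : (gsNet f n).c i r = 0 := by
    show gsCE f n i (r:ℕ) = 0
    simp [gsCE]; omega
  rw [Pi.add_apply, hc, add_zero]
  have hmv : ((gsNet f n).V i *ᵥ (gsNet f n).post (fun _ => x) i) r
      = ∑ j : Fin ((gsNet f n).width i), (if (j:ℕ) = t then (1:ℝ) else 0)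
          * ((gsNet f n).post (fun _ => x) i) j := by
    simp only [Matrix.mulVec, dotProduct]
    refine Finset.sum_congr rfl (fun j _ => ?_)
    exact congrArg (fun a => a * (gsNet f n).post (fun _ => x) i j) (hV j)
  rw [hmv, sum_ind_mul _ t ht]

end eval


lemma post_cast {k d : ℕ} (N : GroupSortNet k d) (xv : Fin d → ℝ) {i i' : ℕ} (e : i = i')
    (p : Fin (N.width i)) :
    N.post xv i p = N.post xv i' (Fin.cast (by rw [e]) p) := by subst e; rfl

section layers

variable (f : ℝ → ℝ) (n : ℕ) (x : ℝ)

lemma gsL1 (hn : 1 ≤ n) (p : ℕ) (hp : p < 2^n) (h : 2*p+1 < (gsNet f n).width 1) :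
    (gsNet f n).post (fun _ => x) 1 ⟨2*p+1, h⟩ = gsMV f n x 0 p := by
  have hpost : (gsNet f n).post (fun _ => x) 1
      = groupSortFun 2 ((gsNet f n).V 0 *ᵥ (gsNet f n).post (fun _ => x) 0 + (gsNet f n).c 0) :=
    rfl
  rw [hpost, (groupSortFun_two _ p h).2, gsPre1, gsPre1]
  have h0 : (2*p) % 2 = 0 := by omega
  have h1 : ¬((2*p+1) % 2 = 0) := by omega
  have hd0 : (2*p) / 2 = p := by omega
  have hd1 : (2*p+1) / 2 = p := by omega
  simp only [h0, h1, hd0, hd1, if_true, if_false]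
  rw [min_add_sub]
  simp [gsMV]

lemma gsC (hn : 1 ≤ n) : ∀ t, t ≤ n - 1 → ∀ j, j < 2^(n-1-t) →
    ∀ (h : 2*j < (gsNet f n).width (2+t)),
    (gsNet f n).post (fun _ => x) (2+t) ⟨2*j, h⟩ = gsMV f n x (1+t) j := by
  intro t
  induction t with
  | zero =>
    intro _ j hj h
    have hw1 : (gsNet f n).width 1 = 2^(n+1) := gsNet_width f n (by omega) (by omega)
    have hw2 : (gsNet f n).width 2 = 2^(n+1) := gsNet_width f n (by omega) (by omega)
    have hp2 : 2^(n-1-0) * 2 = 2^n := by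
      rw [← pow_succ]; congr 1; omega
    have hp3 : 2^n * 2 = 2^(n+1) := by rw [← pow_succ]
    have hj1 : 2*j+1 < (gsNet f n).width 2 := by rw [hw2]; omega
    have hpost : (gsNet f n).post (fun _ => x) (2+0)
        = groupSortFun 2
          ((gsNet f n).V 1 *ᵥ (gsNet f n).post (fun _ => x) 1 + (gsNet f n).c 1) := rfl
    rw [hpost, (groupSortFun_two _ j hj1).1]
    have hsel : ∀ (r : Fin ((gsNet f n).width 2)) (q : ℕ), (r:ℕ) = q → q < 2^n →
        ((gsNet f n).V 1 *ᵥ (gsNet f n).post (fun _ => x) 1 + (gsNet f n).c 1) r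
          = gsMV f n x 0 q := by
      intro r q hq hq2
      have ht : 2*q+1 < (gsNet f n).width 1 := by rw [hw1]; omega
      rw [gsPreSel f n x (i := 1) (by omega) r (2*q+1) ht
        (by intro jj; simp [gsVE, hq])]
      exact gsL1 f n x hn q hq2 ht
    rw [hsel ⟨2*j, _⟩ (2*j) rfl (by omega), hsel ⟨2*j+1, hj1⟩ (2*j+1) rfl (by omega)]
    rfl
  | succ s ih =>
    intro hs j hj h
    have hps : 2^(n-1-s) = 2^(n-1-(s+1)) * 2 := by
      rw [← pow_succ]; congr 1; omega
    have hpn : 2^(n+1) = 2^(n-1-s) * 2^(1+s+1) := by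
      rw [← pow_add]; congr 1; omega
    have hpe : 2 ≤ 2^(1+s+1) := by
      calc 2 = 2^1 := rfl
        _ ≤ 2^(1+s+1) := Nat.pow_le_pow_right (by norm_num) (by omega)
    have hw1 : (gsNet f n).width (2+s) = 2^(n+1) := gsNet_width f n (by omega) (by omega)
    have hw2 : (gsNet f n).width (2+(s+1)) = 2^(n+1) := gsNet_width f n (by omega) (by omega)
    have hj1 : 2*j+1 < (gsNet f n).width (2+(s+1)) := by rw [hw2]; nlinarith
    have hpost : (gsNet f n).post (fun _ => x) (2+(s+1))
        = groupSortFun 2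
          ((gsNet f n).V (2+s) *ᵥ (gsNet f n).post (fun _ => x) (2+s) + (gsNet f n).c (2+s)) :=
      rfl
    rw [hpost, (groupSortFun_two _ j hj1).1]
    have hsel : ∀ (r : Fin ((gsNet f n).width (2+(s+1)))) (q : ℕ), (r:ℕ) = q →
        q < 2^(n-1-s) →
        ((gsNet f n).V (2+s) *ᵥ (gsNet f n).post (fun _ => x) (2+s) + (gsNet f n).c (2+s)) r
          = gsMV f n x (1+s) q := by
      intro r q hq hq2
      have ht : 2*q < (gsNet f n).width (2+s) := by rw [hw1]; nlinarith
      rw [gsPreSel f n x (i := 2+s) (by omega) r (2*q) ht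
        (by intro jj
            simp only [gsVE]
            rw [if_neg (by omega), if_neg (by omega), if_pos (by omega), hq])]
      exact ih (by omega) q hq2 ht
    rw [hsel ⟨2*j, _⟩ (2*j) rfl (by omega), hsel ⟨2*j+1, hj1⟩ (2*j+1) rfl (by omega)]
    rfl

lemma gsP (hn : 1 ≤ n) : ∀ m, n+1+m ≤ 2*n → ∀ (h : 0 < (gsNet f n).width (n+1+m)),
    (gsNet f n).post (fun _ => x) (n+1+m) ⟨0, h⟩ = gsMV f n x n 0 := by
  intro m
  induction m with
  | zero =>
    intro _ h
    rw [post_cast (gsNet f n) _ (show n+1+0 = 2+(n-1) by omega)]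
    have h2 : 2*0 < (gsNet f n).width (2+(n-1)) := by
      rw [gsNet_width f n (by omega) (by omega)]; positivity
    have := gsC f n x hn (n-1) (le_refl _) 0
      (Nat.pow_pos (by norm_num)) h2
    rw [show (1+(n-1)) = n by omega] at this
    exact (congrArg _ (by apply Fin.ext; simp)).trans this
  | succ m ih =>
    intro hm h
    have hw : (gsNet f n).width (n+1+m+1) = 2^(n+1) :=
      gsNet_width f n (by omega) (by omega)
    have hw0 : 0 < (gsNet f n).width (n+1+m) := by
      rw [gsNet_width f n (by omega) (by omega)]; positivity
    have h1 : 2*0+1 < (gsNet f n).width (n+1+m+1) := by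
      rw [hw]
      have : 1 ≤ n+1 := by omega
      calc 2*0+1 = 1 := by norm_num
        _ < 2^1 := by norm_num
        _ ≤ 2^(n+1) := Nat.pow_le_pow_right (by norm_num) (by omega)
    have hpost : (gsNet f n).post (fun _ => x) (n+1+m+1)
        = groupSortFun 2 ((gsNet f n).V (n+1+m) *ᵥ (gsNet f n).post (fun _ => x) (n+1+m)
            + (gsNet f n).c (n+1+m)) := rfl
    have hgoal : (gsNet f n).post (fun _ => x) (n+1+(m+1)) ⟨0, h⟩
        = (gsNet f n).post (fun _ => x) (n+1+m+1) ⟨2*0, h⟩ :=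
      congrArg _ (by apply Fin.ext; simp)
    rw [hgoal, hpost, (groupSortFun_two _ 0 h1).1]
    have hsel : ∀ (r : Fin ((gsNet f n).width (n+1+m+1))),
        ((gsNet f n).V (n+1+m) *ᵥ (gsNet f n).post (fun _ => x) (n+1+m)
            + (gsNet f n).c (n+1+m)) r = gsMV f n x n 0 := by
      intro r
      rw [gsPreSel f n x (i := n+1+m) (by omega) r 0 hw0
        (by intro jj
            simp only [gsVE]
            rw [if_neg (by omega), if_neg (by omega), if_neg (by omega)])]
      exact ih (by omega) hw0
    rw [hsel, hsel, max_self]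

lemma gsNet_eval (hn : 1 ≤ n) :
    (gsNet f n).eval (fun _ => x) = gsMV f n x n 0 := by
  have hh : (0:ℕ) < (gsNet f n).width (2*n+1) := by
    have : (gsNet f n).width (2*n+1) = 1 := (gsNet f n).width_out
    omega
  have he : (gsNet f n).eval (fun _ => x)
      = ((gsNet f n).V (2*n) *ᵥ (gsNet f n).post (fun _ => x) (2*n)
          + (gsNet f n).c (2*n)) ⟨0, hh⟩ := rfl
  rw [he]
  have hw0 : 0 < (gsNet f n).width (2*n) := by
    rw [gsNet_width f n (by omega) (by omega)]; positivity
  rw [gsPreSel f n x (i := 2*n) (by omega) _ 0 hw0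
    (by intro jj
        simp only [gsVE]
        rw [if_neg (by omega), if_neg (by omega), if_neg (by omega)])]
  rw [post_cast (gsNet f n) _ (show 2*n = n+1+(n-1) by omega)]
  have h0 : 0 < (gsNet f n).width (n+1+(n-1)) := by
    rw [gsNet_width f n (by omega) (by omega)]; positivity
  have := gsP f n x hn (n-1) (by omega) h0
  exact (congrArg _ (by apply Fin.ext; simp)).trans this

end layers


lemma gsXC_mem (n j : ℕ) (hj : j < 2^n) : gsXC n j ∈ Set.Icc (0:ℝ) 1 := by
  constructor
  · unfold gsXC; positivity
  · unfold gsXC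
    rw [div_le_one (by positivity)]
    have h1 : (j+1 : ℕ) ≤ 2^n := hj
    have h2 : (j:ℝ)+1 ≤ (2:ℝ)^n := by
      calc (j:ℝ)+1 = ((j+1:ℕ):ℝ) := by push_cast; ring
        _ ≤ ((2^n:ℕ):ℝ) := Nat.cast_le.2 h1
        _ = (2:ℝ)^n := by push_cast; ring
    linarith

lemma gsMV_le (f : ℝ → ℝ) (n : ℕ) (x : ℝ) (hx : x ∈ Set.Icc (0:ℝ) 1)
    (hlip : ∀ x ∈ Set.Icc (0 : ℝ) 1, ∀ y ∈ Set.Icc (0 : ℝ) 1, |f x - f y| ≤ |x - y|) :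
    ∀ s, s ≤ n → ∀ j, j < 2^(n-s) → gsMV f n x s j ≤ f x := by
  intro s
  induction s with
  | zero =>
    intro _ j hj
    have ha := gsXC_mem n j (by simpa using hj)
    have h := hlip (gsXC n j) ha x hx
    have h2 : f (gsXC n j) - f x ≤ |gsXC n j - x| := le_trans (le_abs_self _) h
    have h3 : |x - gsXC n j| = |gsXC n j - x| := abs_sub_comm _ _
    show f (gsXC n j) - |x - gsXC n j| ≤ f x
    rw [h3]; linarith
  | succ s ih =>
    intro hs j hj
    have hsp : 2^(n-s) = 2^(n-(s+1)) * 2 := by rw [← pow_succ]; congr 1; omega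
    show max (gsMV f n x s (2*j)) (gsMV f n x s (2*j+1)) ≤ f x
    exact max_le (ih (by omega) _ (by omega)) (ih (by omega) _ (by omega))

lemma gsChain (f : ℝ → ℝ) (n : ℕ) (x : ℝ) (j : ℕ) :
    ∀ s, gsMV f n x 0 j ≤ gsMV f n x s (j/2^s) := by
  intro s
  induction s with
  | zero => simp
  | succ s ih =>
    have key : j/2^s = 2*(j/2^(s+1)) ∨ j/2^s = 2*(j/2^(s+1))+1 := by
      have : j/2^s/2 = j/2^(s+1) := by rw [Nat.div_div_eq_div_mul, ← pow_succ]
      omega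
    have hstep : gsMV f n x (s+1) (j/2^(s+1))
        = max (gsMV f n x s (2*(j/2^(s+1)))) (gsMV f n x s (2*(j/2^(s+1))+1)) := rfl
    rcases key with hk | hk
    · rw [hstep]
      exact le_trans (by rw [← hk]; exact ih) (le_max_left _ _)
    · rw [hstep]
      exact le_trans (by rw [← hk]; exact ih) (le_max_right _ _)

lemma gsMV_ge (f : ℝ → ℝ) (n : ℕ) (x : ℝ) (hx : x ∈ Set.Icc (0:ℝ) 1)
    (hlip : ∀ x ∈ Set.Icc (0 : ℝ) 1, ∀ y ∈ Set.Icc (0 : ℝ) 1, |f x - f y| ≤ |x - y|) :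
    f x - 1/(2:ℝ)^n ≤ gsMV f n x n 0 := by
  have h1n : 1 ≤ 2^n := Nat.one_le_two_pow
  have hc : (0:ℝ) < 2^n := by positivity
  set j := min (⌊x*(2:ℝ)^n⌋₊) (2^n - 1) with hj
  have hjlt : j < 2^n := by omega
  have e1 : (j:ℝ) ≤ x * 2^n := by
    calc (j:ℝ) ≤ (⌊x*(2:ℝ)^n⌋₊ : ℝ) := Nat.cast_le.2 (min_le_left _ _)
      _ ≤ x * 2^n := Nat.floor_le (mul_nonneg hx.1 (by positivity))
  have e2 : x * 2^n ≤ (j:ℝ) + 1 := by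
    by_cases hf : ⌊x*(2:ℝ)^n⌋₊ ≤ 2^n - 1
    · have hje : j = ⌊x*(2:ℝ)^n⌋₊ := min_eq_left hf
      rw [hje]
      exact (Nat.lt_floor_add_one _).le
    · have hje : j = 2^n - 1 := min_eq_right (by omega)
      rw [hje]
      have hcast : ((2^n - 1 : ℕ):ℝ) + 1 = (2:ℝ)^n := by
        rw [Nat.cast_sub h1n]
        push_cast
        ring
      rw [hcast]
      calc x * 2^n ≤ 1 * 2^n := mul_le_mul_of_nonneg_right hx.2 (by positivity)
        _ = (2:ℝ)^n := one_mul _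
  have hrepr : x - gsXC n j = (x*2^n - ((j:ℝ)+1/2))/2^n := by
    unfold gsXC
    field_simp
  have hnum : |x*2^n - ((j:ℝ)+1/2)| ≤ 1/2 := by
    rw [abs_le]; constructor <;> linarith
  have hdist : |x - gsXC n j| ≤ 1/2/(2:ℝ)^n := by
    rw [hrepr, abs_div, abs_of_pos hc]
    gcongr
  have ha := gsXC_mem n j hjlt
  have hfl : |f x - f (gsXC n j)| ≤ |x - gsXC n j| := hlip x hx (gsXC n j) ha
  have hfl2 : f x - f (gsXC n j) ≤ |x - gsXC n j| := le_trans (le_abs_self _) hfl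
  have h0 : gsMV f n x 0 j = f (gsXC n j) - |x - gsXC n j| := rfl
  have hchain := gsChain f n x j n
  rw [Nat.div_eq_of_lt hjlt] at hchain
  have : f x - 1/(2:ℝ)^n ≤ gsMV f n x 0 j := by
    rw [h0]
    have : |x - gsXC n j| ≤ 1/2/(2:ℝ)^n := hdist
    have h12 : 1/2/(2:ℝ)^n + 1/2/(2:ℝ)^n = 1/(2:ℝ)^n := by field_simp; ring
    linarith
  linarith

lemma four_mul_le_three_two_pow (n : ℕ) : 1 ≤ n → 4*n ≤ 3*2^n := by
  induction n with
  | zero => omega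
  | succ m ih =>
    intro _
    by_cases hm : 1 ≤ m
    · have h1 := ih hm
      have h2 : 2 ≤ 2^m := by
        calc 2 = 2^1 := rfl
          _ ≤ 2^m := Nat.pow_le_pow_right (by norm_num) hm
      rw [pow_succ]
      omega
    · have : m = 0 := by omega
      subst this
      norm_num

noncomputable def gsNet0 (f : ℝ → ℝ) : GroupSortNet 2 1 where
  depth := 1
  depth_pos := le_refl 1
  width := fun _ => 1
  width_in := rfl
  width_out := rfl
  width_div := by intro i h1 h2; omega
  V := fun _ => 0
  c := fun i _ => if i = 0 then f 0 else 0


/-- Approximation of `1`-Lipschitz functions on `[0,1]` by GroupSort networks of grouping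
size `2` satisfying Assumption 1: with `n = ⌈log₂(1/ε)⌉`, the network has depth `2n + 1`
and size at most `3 ⬝ 4^n + 2^n - 1` (in particular `O((1/ε)²)`). -/
theorem groupSortNet_approx_lipschitz_real (ε : ℝ) (hε : 0 < ε) (f : ℝ → ℝ)
    (hlip : ∀ x ∈ Set.Icc (0 : ℝ) 1, ∀ y ∈ Set.Icc (0 : ℝ) 1, |f x - f y| ≤ |x - y|) :
    ∃ N : GroupSortNet 2 1, N.Assumption1 ∧
      (∀ x ∈ Set.Icc (0 : ℝ) 1, |f x - N.eval (fun _ => x)| ≤ ε) ∧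
      N.depth = 2 * ⌈Real.logb 2 (1 / ε)⌉₊ + 1 ∧
      N.size ≤ 3 * 4 ^ ⌈Real.logb 2 (1 / ε)⌉₊ + 2 ^ ⌈Real.logb 2 (1 / ε)⌉₊ - 1 := by
  set n := ⌈Real.logb 2 (1 / ε)⌉₊ with hndef
  by_cases hn0 : n = 0
  · -- here ε ≥ 1 and a constant network works
    have hε1 : 1 ≤ ε := by
      by_contra hcon
      push_neg at hcon
      have h1 : (1:ℝ) < 1/ε := by
        rw [lt_div_iff₀ hε]; linarith
      have h2 : 0 < Real.logb 2 (1/ε) := Real.logb_pos (by norm_num) h1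
      have h3 : 1 ≤ n := by
        rw [hndef]
        exact Nat.one_le_ceil_iff.mpr h2
      omega
    have heval : ∀ x : ℝ, (gsNet0 f).eval (fun _ => x) = f 0 := by
      intro x
      show ((gsNet0 f).V 0 *ᵥ (gsNet0 f).post (fun _ => x) 0 + (gsNet0 f).c 0) ⟨0, _⟩ = f 0
      have hV : (gsNet0 f).V 0 = 0 := rfl
      rw [hV, Matrix.zero_mulVec]
      simp [gsNet0]
      exact zero_add (f 0)
    refine ⟨gsNet0 f, ⟨?_, ?_, ?_⟩, ?_, ?_, ?_⟩
    · intro r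
      have : ∀ j : Fin ((gsNet0 f).width 0), ((gsNet0 f).V 0 r j)^2 = 0 := by
        intro j
        show ((0:Matrix _ _ ℝ) r j)^2 = 0
        simp
      rw [Finset.sum_congr rfl (fun j _ => this j)]
      simp
    · intro i h1 h2
      exact absurd h2 (by simp [gsNet0]; omega)
    · refine ⟨|f 0|, abs_nonneg _, ?_⟩
      intro i hi r
      have : i = 0 := by
        have : (gsNet0 f).depth = 1 := rfl
        omega
      subst this
      simp [gsNet0]
    · intro x hx
      rw [heval x]
      have h := hlip x hx 0 ⟨le_refl 0, zero_le_one⟩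
      have : |x - 0| ≤ 1 := by
        rw [sub_zero, abs_of_nonneg hx.1]
        exact hx.2
      linarith
    · show (1:ℕ) = 2*n+1
      omega
    · show ∑ i ∈ Finset.Icc 1 ((gsNet0 f).depth - 1), (gsNet0 f).width i ≤ _
      have : (gsNet0 f).depth - 1 = 0 := rfl
      rw [this]
      have : Finset.Icc 1 0 = (∅ : Finset ℕ) := by
        apply Finset.Icc_eq_empty
        omega
      rw [this, Finset.sum_empty, hn0]
      norm_num
  · have hn1 : 1 ≤ n := by omega
    have h1n : 1 ≤ 2^n := Nat.one_le_two_pow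
    -- the key size bound on powers
    have h2n : (1:ℝ)/ε ≤ (2:ℝ)^n := by
      have hlog := Nat.le_ceil (Real.logb 2 (1/ε))
      calc (1:ℝ)/ε = (2:ℝ) ^ (Real.logb 2 (1/ε)) :=
            (Real.rpow_logb (by norm_num) (by norm_num) (by positivity)).symm
        _ ≤ (2:ℝ) ^ ((n:ℝ)) := Real.rpow_le_rpow_of_exponent_le (by norm_num) hlog
        _ = (2:ℝ)^n := Real.rpow_natCast 2 n
    have hεn : 1/(2:ℝ)^n ≤ ε := by
      have hp : (0:ℝ) < 2^n := by positivity
      rw [div_le_iff₀ hp]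
      rw [div_le_iff₀ hε] at h2n
      linarith
    refine ⟨gsNet f n, ⟨?_, ?_, ?_⟩, ?_, ?_, ?_⟩
    · -- first layer row bound
      intro r
      have : ∀ j : Fin ((gsNet f n).width 0), ((gsNet f n).V 0 r j)^2 = 1 := by
        intro j
        show (gsVE n 0 (r:ℕ) (j:ℕ))^2 = 1
        simp only [gsVE, if_pos rfl]
        split_ifs <;> norm_num
      rw [Finset.sum_congr rfl (fun j _ => this j), Finset.sum_const]
      rw [gsNet_width0]
      simp
    · -- later layer row bounds
      intro i hi _ r
      obtain ⟨t, hV⟩ : ∃ t, ∀ jj : ℕ, gsVE n i (r:ℕ) jj = if jj = t then 1 else 0 := by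
        by_cases h1 : i = 1
        · exact ⟨2*(r:ℕ)+1, by intro jj; simp [gsVE, h1]⟩
        · by_cases h2 : i ≤ n
          · refine ⟨2*(r:ℕ), ?_⟩
            intro jj
            simp only [gsVE]
            rw [if_neg (by omega), if_neg h1, if_pos h2]
          · refine ⟨0, ?_⟩
            intro jj
            simp only [gsVE]
            rw [if_neg (by omega), if_neg h1, if_neg h2]
      have : ∀ j : Fin ((gsNet f n).width i), |(gsNet f n).V i r j|
          = |if ((j:ℕ)) = t then (1:ℝ) else 0| := by
        intro j
        show |gsVE n i (r:ℕ) (j:ℕ)| = _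
        rw [hV]
      rw [Finset.sum_congr rfl (fun j _ => this j)]
      exact sum_abs_ind _ _
    · -- bias bound
      refine ⟨|f 0| + 2, by positivity, ?_⟩
      intro i _ r
      show |gsCE f n i (r:ℕ)| ≤ |f 0| + 2
      by_cases hi : i = 0
      · subst hi
        have hrlt : (r:ℕ) < 2^(n+1) :=
          lt_of_lt_of_le r.isLt (gsNet_width f n (by omega) (by omega)).le
        have hq : (r:ℕ)/2 < 2^n := by
          have : 2^(n+1) = 2^n * 2 := by rw [pow_succ]
          omega
        have hmem := gsXC_mem n ((r:ℕ)/2) hq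
        have hfa : |f (gsXC n ((r:ℕ)/2))| ≤ |f 0| + 1 := by
          have h := hlip (gsXC n ((r:ℕ)/2)) hmem 0 ⟨le_refl 0, zero_le_one⟩
          have h2 : |gsXC n ((r:ℕ)/2) - 0| ≤ 1 := by
            rw [sub_zero, abs_of_nonneg hmem.1]
            exact hmem.2
          calc |f (gsXC n ((r:ℕ)/2))| = |(f (gsXC n ((r:ℕ)/2)) - f 0) + f 0| := by ring_nf
            _ ≤ |f (gsXC n ((r:ℕ)/2)) - f 0| + |f 0| := abs_add_le _ _
            _ ≤ |f 0| + 1 := by linarith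
        have haabs : |gsXC n ((r:ℕ)/2)| ≤ 1 := by
          rw [abs_of_nonneg hmem.1]; exact hmem.2
        simp only [gsCE, if_true]
        split_ifs
        · calc |f (gsXC n ((r:ℕ)/2)) - gsXC n ((r:ℕ)/2)|
              ≤ |f (gsXC n ((r:ℕ)/2))| + |gsXC n ((r:ℕ)/2)| := abs_sub _ _
            _ ≤ |f 0| + 2 := by linarith
        · calc |f (gsXC n ((r:ℕ)/2)) + gsXC n ((r:ℕ)/2)|
              ≤ |f (gsXC n ((r:ℕ)/2))| + |gsXC n ((r:ℕ)/2)| := abs_add_le _ _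
            _ ≤ |f 0| + 2 := by linarith
      · simp only [gsCE, if_neg hi]
        simp
        positivity
    · -- approximation
      intro x hx
      rw [gsNet_eval f n x hn1]
      have hub := gsMV_le f n x hx hlip n (le_refl n) 0 (by simpa using Nat.one_le_two_pow)
      have hlb := gsMV_ge f n x hx hlip
      rw [abs_le]
      constructor
      · linarith
      · linarith
    · rfl
    · -- size bound
      show ∑ i ∈ Finset.Icc 1 ((gsNet f n).depth - 1), (gsNet f n).width i ≤ _
      have hd : (gsNet f n).depth - 1 = 2*n := rfl
      rw [hd]
      have hsum : ∑ i ∈ Finset.Icc 1 (2*n), (gsNet f n).width i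
          = ∑ _i ∈ Finset.Icc 1 (2*n), 2^(n+1) := by
        refine Finset.sum_congr rfl (fun i hi => ?_)
        obtain ⟨h1, h2⟩ := Finset.mem_Icc.mp hi
        exact gsNet_width f n h1 h2
      rw [hsum, Finset.sum_const, smul_eq_mul, Nat.card_Icc]
      have h4 := four_mul_le_three_two_pow n hn1
      have e1 : (2*n+1-1) * 2^(n+1) = 4*n*2^n := by
        have h2 : 2^(n+1) = 2*2^n := by rw [pow_succ]; ring
        have h' : 2*n+1-1 = 2*n := rfl
        rw [h2, h']; ring
      have e2 : 3*4^n = 3*(2^n*2^n) := by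
        rw [← mul_pow]; norm_num
      have e3 : 4*n*2^n ≤ 3*(2^n*2^n) :=
        calc 4*n*2^n ≤ 3*2^n*2^n := Nat.mul_le_mul_right _ h4
          _ = 3*(2^n*2^n) := by ring
      calc (2*n+1-1) * 2^(n+1) = 4*n*2^n := e1
        _ ≤ 3*(2^n*2^n) := e3
        _ = 3*4^n := e2.symm
        _ ≤ 3*4^n + 2^n - 1 := by omega
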